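/- Let C be a category with pullbacks in which the left square of a diagram of two horizontally composed squares is a stable pushout. If the outer rectangle and the left square of a second diagram sharing the same right square are pullbacks, and likewise for a third such diagram, then the common right square is itself a pullback. More precisely: given a stable pushout square (f₁ : Y → X₁, f₂ : Y → X₂, r₁ : X₁ → R, r₂ : X₂ → R), morphisms w : W → Q', r : W → R, q : Q' → Q, s : R → Q with q ∘ w = s ∘ r, and pullback squares exhibiting (x₁ : Z₁ → X₁, z₁ : Z₁ → W) as a pullback of r along r₁ with (w ∘ z₁, r₁ ∘ x₁) forming a pullback of q along s ∘ r₁ as outer rectangle, and similarly for (x₂ : Z₂ → X₂, z₂ : Z₂ → W) along r₂, then the square (r, w, s, q) is a pullback. -/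
import Mathlib


open CategoryTheory CategoryTheory.Limits

universe v u

variable {C : Type u} [Category.{v} C]

/-- A pushout square is *stable* if every pullback of it (in the sense of a
commutative cube all of whose vertical faces are pullbacks and whose bottom
face is the given square) has a pushout as its top face. -/
def StablePushout {X Y Z W : C} (f : X ⟶ Y) (g : X ⟶ Z) (inl : Y ⟶ W) (inr : Z ⟶ W) : Prop :=
  IsPushout f g inl inr ∧
  ∀ ⦃X' Y' Z' W' : C⦄ (f' : X' ⟶ Y') (g' : X' ⟶ Z') (inl' : Y' ⟶ W') (inr' : Z' ⟶ W')
    (x : X' ⟶ X) (y : Y' ⟶ Y) (z : Z' ⟶ Z) (w : W' ⟶ W),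
    f' ≫ inl' = g' ≫ inr' →
    IsPullback f' x y f → IsPullback g' x z g →
    IsPullback inl' y w inl → IsPullback inr' z w inr →
    IsPushout f' g' inl' inr'

/-- A pushout square is a *Van Kampen square* if for every commutative cube over it
whose back and left faces (the faces over the two span legs) are pullbacks, the top
face is a pushout iff the front and right faces are pullbacks. -/
def VanKampenSquare {X Y Z W : C} (f : X ⟶ Y) (g : X ⟶ Z) (inl : Y ⟶ W) (inr : Z ⟶ W) : Prop :=
  IsPushout f g inl inr ∧
  ∀ ⦃X' Y' Z' W' : C⦄ (f' : X' ⟶ Y') (g' : X' ⟶ Z') (inl' : Y' ⟶ W') (inr' : Z' ⟶ W')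
    (x : X' ⟶ X) (y : Y' ⟶ Y) (z : Z' ⟶ Z) (w : W' ⟶ W),
    f' ≫ inl' = g' ≫ inr' →
    IsPullback f' x y f → IsPullback g' x z g →
    inl' ≫ w = y ≫ inl → inr' ≫ w = z ≫ inr →
    (IsPushout f' g' inl' inr' ↔ (IsPullback inl' y w inl ∧ IsPullback inr' z w inr))

/-- A morphism `m : X ⟶ Y` is `N`-preadhesive if for every `n : X ⟶ Z` in `N` there is
a stable pushout square of `m` along `n` which is also a pullback square. -/
def Preadhesive (N : MorphismProperty C) {X Y : C} (m : X ⟶ Y) : Prop :=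
  ∀ ⦃Z : C⦄ (n : X ⟶ Z), N n →
    ∃ (W : C) (p : Z ⟶ W) (q : Y ⟶ W),
      StablePushout n m p q ∧ IsPullback n m p q

/-- A morphism is `N`-adhesive if all of its pullbacks are `N`-preadhesive. -/
def NAdhesive (N : MorphismProperty C) {X Y : C} (m : X ⟶ Y) : Prop :=
  ∀ ⦃X' Y' : C⦄ (m' : X' ⟶ Y') (x : X' ⟶ X) (y : Y' ⟶ Y),
    IsPullback m' x y m → Preadhesive N m'

/-- A *matching class*: contains all isos, closed under composition and decomposition,
stable under pullbacks and pushouts. -/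
structure MatchingClass (N : MorphismProperty C) : Prop where
  iso_mem : ∀ ⦃X Y : C⦄ (f : X ⟶ Y), IsIso f → N f
  comp_mem : ∀ ⦃X Y Z : C⦄ (f : X ⟶ Y) (g : Y ⟶ Z), N f → N g → N (f ≫ g)
  decomp : ∀ ⦃X Y Z : C⦄ (f : X ⟶ Y) (g : Y ⟶ Z), N (f ≫ g) → N g → N f
  pullback_stable : ∀ ⦃P X Y Z : C⦄ (fst : P ⟶ X) (snd : P ⟶ Y) (f : X ⟶ Z) (g : Y ⟶ Z),
    IsPullback fst snd f g → N f → N snd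
  pushout_stable : ∀ ⦃Z X Y P : C⦄ (f : Z ⟶ X) (g : Z ⟶ Y) (inl : X ⟶ P) (inr : Y ⟶ P),
    IsPushout f g inl inr → N g → N inl

/-- A *stable system of monos*. -/
structure StableSystem (M : MorphismProperty C) : Prop where
  mono : ∀ ⦃X Y : C⦄ (f : X ⟶ Y), M f → Mono f
  iso_mem : ∀ ⦃X Y : C⦄ (f : X ⟶ Y), IsIso f → M f
  comp_mem : ∀ ⦃X Y Z : C⦄ (f : X ⟶ Y) (g : Y ⟶ Z), M f → M g → M (f ≫ g)
  pullback_stable : ∀ ⦃P X Y Z : C⦄ (fst : P ⟶ X) (snd : P ⟶ Y) (f : X ⟶ Z) (g : Y ⟶ Z),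
    IsPullback fst snd f g → M f → M snd

/-- `C` is `M`-adhesive: `M`-pullbacks exist, and pushouts along arrows of `M`
(along arbitrary morphisms) exist and are Van Kampen squares. -/
def MAdhesive (M : MorphismProperty C) : Prop :=
  (∀ ⦃X Y Z : C⦄ (m : X ⟶ Y) (g : Z ⟶ Y), M m →
    ∃ (P : C) (p : P ⟶ X) (q : P ⟶ Z), IsPullback p q m g) ∧
  (∀ ⦃X Y Z : C⦄ (m : X ⟶ Y) (f : X ⟶ Z), M m →
    ∃ (W : C) (inl : Z ⟶ W) (inr : Y ⟶ W), VanKampenSquare f m inl inr)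

/-- The class of regular monomorphisms. -/
def RegMonos (C : Type u) [Category.{v} C] : MorphismProperty C :=
  fun _ _ f => Nonempty (RegularMono f)


/-- Left cancellation property for pullbacks over a stable pushout. -/
theorem stmt4 [HasPullbacks C]
    {Y X₁ X₂ R W Q' Q Z₁ Z₂ : C}
    (f₁ : Y ⟶ X₁) (f₂ : Y ⟶ X₂) (r₁ : X₁ ⟶ R) (r₂ : X₂ ⟶ R)
    (hst : StablePushout f₁ f₂ r₁ r₂)
    (x₁ : Z₁ ⟶ X₁) (z₁ : Z₁ ⟶ W) (x₂ : Z₂ ⟶ X₂) (z₂ : Z₂ ⟶ W)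
    (w : W ⟶ Q') (r : W ⟶ R) (q : Q' ⟶ Q) (s : R ⟶ Q)
    (hcomm : w ≫ q = r ≫ s)
    (h1 : IsPullback z₁ x₁ r r₁)
    (h1' : IsPullback (z₁ ≫ w) x₁ q (r₁ ≫ s))
    (h2 : IsPullback z₂ x₂ r r₂)
    (h2' : IsPullback (z₂ ≫ w) x₂ q (r₂ ≫ s)) :
    IsPullback w r q s := by
  -- Form the pullback of q along s
  let P := pullback q s
  let p₁ : P ⟶ Q' := pullback.fst q s
  let p₂ : P ⟶ R := pullback.snd q s
  have hP : IsPullback p₁ p₂ q s := IsPullback.of_hasPullback q s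
  -- comparison map
  let u : W ⟶ P := hP.lift w r hcomm
  have hu₁ : u ≫ p₁ = w := hP.lift_fst w r hcomm
  have hu₂ : u ≫ p₂ = r := hP.lift_snd w r hcomm
  -- back face over f₁
  let Y' := pullback x₁ f₁
  let g₁ : Y' ⟶ Z₁ := pullback.fst x₁ f₁
  let yv : Y' ⟶ Y := pullback.snd x₁ f₁
  have hb1 : IsPullback g₁ yv x₁ f₁ := IsPullback.of_hasPullback x₁ f₁
  -- induced g₂
  have hg2comm : (g₁ ≫ z₁) ≫ r = (yv ≫ f₂) ≫ r₂ := by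
    rw [Category.assoc, h1.w, ← Category.assoc, hb1.w, Category.assoc, Category.assoc, hst.1.w]
  let g₂ : Y' ⟶ Z₂ := h2.lift (g₁ ≫ z₁) (yv ≫ f₂) hg2comm
  have hg2z : g₂ ≫ z₂ = g₁ ≫ z₁ := h2.lift_fst _ _ _
  have hg2x : g₂ ≫ x₂ = yv ≫ f₂ := h2.lift_snd _ _ _
  -- big pullback over the composite
  have hbig : IsPullback (g₂ ≫ z₂) yv r (f₂ ≫ r₂) := by
    rw [hg2z, ← hst.1.w]
    exact hb1.paste_horiz h1
  have hb2 : IsPullback g₂ yv x₂ f₂ := hbig.of_right hg2x h2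
  -- front faces over r₁ and r₂ (with apex P)
  have hf1 : IsPullback (z₁ ≫ u) x₁ p₂ r₁ := by
    refine IsPullback.of_right ?_ ?_ hP
    · rw [Category.assoc, hu₁]; exact h1'
    · rw [Category.assoc, hu₂, h1.w]
  have hf2 : IsPullback (z₂ ≫ u) x₂ p₂ r₂ := by
    refine IsPullback.of_right ?_ ?_ hP
    · rw [Category.assoc, hu₁]; exact h2'
    · rw [Category.assoc, hu₂, h2.w]
  -- two pushouts by stability
  have hcw : g₁ ≫ z₁ = g₂ ≫ z₂ := hg2z.symm
  have hPO1 : IsPushout g₁ g₂ z₁ z₂ :=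
    hst.2 g₁ g₂ z₁ z₂ yv x₁ x₂ r hcw hb1 hb2 h1 h2
  have hPO2 : IsPushout g₁ g₂ (z₁ ≫ u) (z₂ ≫ u) :=
    hst.2 g₁ g₂ (z₁ ≫ u) (z₂ ≫ u) yv x₁ x₂ p₂
      (by rw [← Category.assoc, ← Category.assoc, hcw]) hb1 hb2 hf1 hf2
  -- u is an iso
  have hvcomm : g₁ ≫ z₁ = g₂ ≫ z₂ := hcw
  let v : P ⟶ W := hPO2.desc z₁ z₂ hvcomm
  have hv1 : (z₁ ≫ u) ≫ v = z₁ := hPO2.inl_desc z₁ z₂ hvcomm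
  have hv2 : (z₂ ≫ u) ≫ v = z₂ := hPO2.inr_desc z₁ z₂ hvcomm
  have huv : u ≫ v = 𝟙 W := by
    apply hPO1.hom_ext
    · rw [Category.comp_id, ← Category.assoc, hv1]
    · rw [Category.comp_id, ← Category.assoc, hv2]
  have hvu : v ≫ u = 𝟙 P := by
    apply hPO2.hom_ext
    · rw [Category.comp_id, ← Category.assoc, hv1]
    · rw [Category.comp_id, ← Category.assoc, hv2]
  have : IsIso u := ⟨v, huv, hvu⟩
  -- conclude
  have hleft : IsPullback u r p₂ (𝟙 R) :=
    IsPullback.of_horiz_isIso ⟨by rw [hu₂, Category.comp_id]⟩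
  have := hleft.paste_horiz hP
  rw [hu₁, Category.id_comp] at this
  exact this
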